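/- Let p be a positive integer. If f(z) = ∑_{k=0}^∞ a_k z^{pk} converges for all z in the unit disk 𝔻 and |f(z)| ≤ 1 for all z ∈ 𝔻, then ∑_{k=0}^∞ |a_k| r^{pk} ≤ 1 for all r with 0 ≤ r ≤ 3^{−1/p}. -/

import Mathlib

open Complex MeasureTheory intervalIntegral Real



lemma bohr_aux_exp_integral (m : ℤ) (hm : m ≠ 0) :
    ∫ θ in (0:ℝ)..(2*Real.pi), Complex.exp (m * θ * Complex.I) = 0 := by
  have hc : (m : ℂ) * Complex.I ≠ 0 :=
    mul_ne_zero (Int.cast_ne_zero.mpr hm) Complex.I_ne_zero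
  have h := integral_exp_mul_complex (a := (0:ℝ)) (b := 2*Real.pi) hc
  have h2 : ∀ θ : ℝ, (m : ℂ) * Complex.I * θ = m * θ * Complex.I := by intro θ; ring
  simp only [h2] at h
  rw [h]
  have : Complex.exp ((m:ℂ) * (2*Real.pi:ℝ) * Complex.I) = 1 := by
    push_cast
    rw [show (m:ℂ) * (2*Real.pi) * Complex.I = m * (2 * Real.pi * Complex.I) by ring]
    exact Complex.exp_int_mul_two_pi_mul_I m
  rw [this]
  simp


lemma bohr_aux_coeff_integral (a : ℕ → ℂ) {s : ℝ} (hs0 : 0 ≤ s)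
    (hsum : Summable fun n => ‖a n‖ * s ^ n) (m : ℤ) :
    ∫ θ in (0:ℝ)..(2*Real.pi),
        (∑' n : ℕ, a n * (s * Complex.exp (θ * Complex.I)) ^ n) * Complex.exp (m * θ * Complex.I)
      = ∑' n : ℕ, (if ((n:ℤ) + m = 0) then ((2*Real.pi:ℝ):ℂ) * (a n * s ^ n) else 0) := by
  have hcont : ∀ n : ℕ, Continuous fun θ : ℝ =>
      a n * s ^ n * Complex.exp ((((n:ℤ) + m : ℤ):ℂ) * θ * Complex.I) := by
    intro n; fun_prop
  set F : ℕ → C(ℝ, ℂ) := fun n => ⟨_, hcont n⟩ with hF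
  have hnorm : ∀ (n : ℕ) (θ : ℝ), ‖F n θ‖ = ‖a n‖ * s ^ n := by
    intro n θ
    have h1 : ((((n:ℤ) + m : ℤ):ℂ) * θ * Complex.I) = (((((n:ℤ)+m : ℤ) : ℝ) * θ : ℝ) : ℂ) * Complex.I := by
      push_cast; ring
    simp only [hF, ContinuousMap.coe_mk, norm_mul, h1]
    rw [Complex.norm_exp_ofReal_mul_I, mul_one, norm_pow, Complex.norm_real, Real.norm_eq_abs,
      _root_.abs_of_nonneg hs0]
  have hintegrand : ∀ θ : ℝ,
      (∑' n : ℕ, a n * (s * Complex.exp (θ * Complex.I)) ^ n) * Complex.exp (m * θ * Complex.I)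
        = ∑' n : ℕ, F n θ := by
    intro θ
    rw [← tsum_mul_right]
    congr 1; funext n
    simp only [hF, ContinuousMap.coe_mk]
    have e1 : (Complex.exp (θ * Complex.I)) ^ n = Complex.exp (n * (θ * Complex.I)) :=
      (Complex.exp_nat_mul _ n).symm
    rw [mul_pow, e1, show a n * ((s:ℂ)^n * Complex.exp (n * (θ*Complex.I))) * Complex.exp (m*θ*Complex.I)
        = a n * (s:ℂ)^n * (Complex.exp (n * (θ*Complex.I)) * Complex.exp (m*θ*Complex.I)) by ring,
      ← Complex.exp_add]
    congr 1
    push_cast; ring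
  have hsummable : Summable fun n : ℕ =>
      ‖(F n).restrict (⟨Set.uIcc (0:ℝ) (2*Real.pi), isCompact_uIcc⟩ : TopologicalSpace.Compacts ℝ)‖ := by
    apply Summable.of_nonneg_of_le (fun n => norm_nonneg _) _ hsum
    intro n
    apply ContinuousMap.norm_le _ (by positivity) |>.mpr
    intro x
    rw [ContinuousMap.restrict_apply]
    exact le_of_eq (hnorm n x)
  have hswap := tsum_intervalIntegral_eq_of_summable_norm (a := 0) (b := 2*Real.pi) hsummable
  rw [intervalIntegral.integral_congr (g := fun θ => ∑' n, F n θ) (fun θ _ => hintegrand θ), ← hswap]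
  congr 1; funext n
  by_cases h : (n:ℤ) + m = 0
  · simp only [h, if_pos]
    have hz : ((((n:ℤ) + m : ℤ)):ℂ) = 0 := by rw [h]; simp
    have hc : ∀ θ : ℝ, F n θ = a n * s ^ n := by
      intro θ; simp only [hF, ContinuousMap.coe_mk, hz, zero_mul, Complex.exp_zero, mul_one]
    rw [intervalIntegral.integral_congr (fun θ _ => hc θ), intervalIntegral.integral_const]
    simp [Complex.real_smul]
  · simp only [h, if_neg, if_false]
    have hc : ∀ θ : ℝ, F n θ
        = a n * s ^ n * Complex.exp ((((n:ℤ)+m : ℤ):ℂ) * θ * Complex.I) := fun θ => rfl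
    rw [intervalIntegral.integral_congr (fun θ _ => hc θ), intervalIntegral.integral_const_mul,
      bohr_aux_exp_integral _ h, mul_zero]

lemma bohr_aux_intervalIntegral_conj (h : ℝ → ℂ) (x y : ℝ) :
    ∫ θ in x..y, (starRingEnd ℂ) (h θ) = (starRingEnd ℂ) (∫ θ in x..y, h θ) := by
  simp only [intervalIntegral, ← integral_conj, map_sub]

lemma bohr_aux_summable (a : ℕ → ℂ)
    (ha : ∀ w : ℂ, ‖w‖ < 1 → ∃ v, HasSum (fun n => a n * w ^ n) v ∧ ‖v‖ ≤ 1)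
    {s : ℝ} (hs0 : 0 ≤ s) (hs1 : s < 1) : Summable fun n => ‖a n‖ * s ^ n := by
  set s' : ℝ := (s + 1) / 2 with hs'
  have hss' : s < s' := by rw [hs']; linarith
  have hs'0 : 0 < s' := by rw [hs']; linarith
  have hs'1 : s' < 1 := by rw [hs']; linarith
  obtain ⟨v, hv, -⟩ := ha (s' : ℂ) (by
    rw [Complex.norm_real, Real.norm_eq_abs, _root_.abs_of_nonneg hs'0.le]; exact hs'1)
  have h0 : Filter.Tendsto (fun n => ‖a n * (s':ℂ) ^ n‖) Filter.atTop (nhds 0) := by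
    have := hv.summable.tendsto_atTop_zero
    simpa using this.norm
  have hev : ∀ᶠ n in Filter.atTop, ‖a n * (s':ℂ) ^ n‖ < 1 :=
    h0.eventually_lt_const one_pos
  have hgeo : Summable fun n : ℕ => (s / s') ^ n :=
    summable_geometric_of_lt_one (by positivity) (by rw [div_lt_one hs'0]; exact hss')
  apply Summable.of_norm_bounded_eventually_nat hgeo
  filter_upwards [hev] with n hn
  have hnorm : ‖a n * (s':ℂ) ^ n‖ = ‖a n‖ * s' ^ n := by
    rw [norm_mul, norm_pow, Complex.norm_real, Real.norm_eq_abs, _root_.abs_of_nonneg hs'0.le]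
  rw [hnorm] at hn
  have : ‖a n‖ * s ^ n = (‖a n‖ * s' ^ n) * (s / s') ^ n := by
    rw [mul_assoc, ← mul_pow, mul_div_assoc', mul_div_cancel_left₀ s hs'0.ne']
  rw [Real.norm_eq_abs, _root_.abs_of_nonneg (by positivity), this]
  calc (‖a n‖ * s' ^ n) * (s / s') ^ n ≤ 1 * (s / s') ^ n := by
        apply mul_le_mul_of_nonneg_right hn.le (by positivity)
    _ = (s / s') ^ n := one_mul _

lemma bohr_aux_a0 (a : ℕ → ℂ)
    (ha : ∀ w : ℂ, ‖w‖ < 1 → ∃ v, HasSum (fun n => a n * w ^ n) v ∧ ‖v‖ ≤ 1) :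
    ‖a 0‖ ≤ 1 := by
  obtain ⟨v, hv, hv1⟩ := ha 0 (by simp)
  have h : HasSum (fun n => a n * (0:ℂ) ^ n) (a 0) := by
    have := hasSum_single (f := fun n => a n * (0:ℂ) ^ n) 0
      (fun b hb => by simp [zero_pow hb])
    simpa using this
  rwa [← hv.unique h]

lemma bohr_aux_coeff_bound (a : ℕ → ℂ)
    (ha : ∀ w : ℂ, ‖w‖ < 1 → ∃ v, HasSum (fun n => a n * w ^ n) v ∧ ‖v‖ ≤ 1)
    (k : ℕ) (hk : 0 < k) : ‖a k‖ ≤ 2 * (1 - ‖a 0‖) := by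
  have hπ : (0:ℝ) < Real.pi := Real.pi_pos
  have key : ∀ s : ℝ, s ∈ Set.Ioo (0:ℝ) 1 → ‖a k‖ * s ^ k ≤ 2 * (1 - ‖a 0‖) := by
    rintro s ⟨hs0, hs1⟩
    have hsum := bohr_aux_summable a ha hs0.le hs1
    set g : ℝ → ℂ := fun θ => ∑' n, a n * ((s:ℂ) * Complex.exp (θ * Complex.I)) ^ n with hg
    have hnormw : ∀ θ : ℝ, ‖(s:ℂ) * Complex.exp (θ * Complex.I)‖ = s := by
      intro θ
      rw [norm_mul, Complex.norm_real, Real.norm_eq_abs, _root_.abs_of_nonneg hs0.le,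
        Complex.norm_exp_ofReal_mul_I, mul_one]
    have hgcont : Continuous g := by
      apply continuous_tsum (u := fun n => ‖a n‖ * s ^ n) (fun n => by fun_prop) hsum
      intro n θ
      rw [norm_mul, norm_pow, hnormw θ]
    have hgle : ∀ θ : ℝ, ‖g θ‖ ≤ 1 := by
      intro θ
      obtain ⟨v, hv, hv1⟩ := ha _ (by rw [hnormw θ]; exact hs1)
      rw [hg]; simpa [hv.tsum_eq] using hv1
    obtain ⟨l, hl1, hl0⟩ : ∃ l : ℂ, ‖l‖ = 1 ∧ l * a 0 = (‖a 0‖ : ℝ) := by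
      by_cases h : a 0 = 0
      · exact ⟨1, by simp, by simp [h]⟩
      · have hne : ((‖a 0‖ : ℝ) : ℂ) ≠ 0 := by
          simpa [Complex.ofReal_eq_zero, norm_eq_zero] using h
        refine ⟨(starRingEnd ℂ) (a 0) / ‖a 0‖, ?_, ?_⟩
        · rw [norm_div, RCLike.norm_conj, Complex.norm_real, Real.norm_eq_abs,
            _root_.abs_of_nonneg (norm_nonneg _), div_self (by simpa using h)]
        · have h2 : a 0 * (starRingEnd ℂ) (a 0) = ((‖a 0‖:ℝ):ℂ) * ((‖a 0‖:ℝ):ℂ) := by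
            rw [Complex.mul_conj, Complex.normSq_eq_norm_sq]
            push_cast
            ring
          rw [div_mul_eq_mul_div, mul_comm ((starRingEnd ℂ) (a 0)) (a 0), h2,
            mul_div_assoc, div_self hne, mul_one]
    set u : ℝ → ℝ := fun θ => 1 - (l * g θ).re with hu
    have hu0 : ∀ θ, 0 ≤ u θ := by
      intro θ
      have h1 : (l * g θ).re ≤ ‖l * g θ‖ := Complex.re_le_norm _
      have h2 : ‖l * g θ‖ ≤ 1 := by rw [norm_mul, hl1, one_mul]; exact hgle θ
      simp only [hu]; linarith
    have hucont : Continuous u := by fun_prop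
    -- basic coefficient integrals
    have hIneg : ∫ θ in (0:ℝ)..(2*Real.pi), g θ * Complex.exp ((Int.cast (-(k:ℤ)) : ℂ) * θ * Complex.I)
        = ((2*Real.pi:ℝ):ℂ) * (a k * s ^ k) := by
      rw [hg, bohr_aux_coeff_integral a hs0.le hsum (-(k:ℤ))]
      rw [tsum_eq_single k (fun b hb => by rw [if_neg (by omega)])]
      rw [if_pos (by omega)]
    have hIpos : ∫ θ in (0:ℝ)..(2*Real.pi), g θ * Complex.exp ((Int.cast ((k:ℤ)) : ℂ) * θ * Complex.I)
        = 0 := by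
      rw [hg, bohr_aux_coeff_integral a hs0.le hsum ((k:ℤ))]
      convert tsum_zero with n
      rw [if_neg (by omega)]
    have hI0 : ∫ θ in (0:ℝ)..(2*Real.pi), g θ = ((2*Real.pi:ℝ):ℂ) * a 0 := by
      have h := bohr_aux_coeff_integral a hs0.le hsum 0
      rw [tsum_eq_single 0 (fun b hb => by rw [if_neg (by omega)]), if_pos (by omega)] at h
      simp only [pow_zero, mul_one] at h
      rw [← h]
      apply intervalIntegral.integral_congr
      intro θ _
      norm_num [hg]
    -- conjugate of exponential
    have hce : ∀ (m : ℤ) (θ : ℝ), (starRingEnd ℂ) (Complex.exp ((Int.cast (-m) : ℂ) * θ * Complex.I))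
        = Complex.exp ((Int.cast m : ℂ) * θ * Complex.I) := by
      intro m θ
      rw [← Complex.exp_conj]
      congr 1
      simp only [map_mul, Complex.conj_I, map_intCast, Complex.conj_ofReal]
      push_cast
      ring
    -- conjugate integral identity
    have hconj : ∀ m : ℤ, (∫ θ in (0:ℝ)..(2*Real.pi),
        (starRingEnd ℂ) (l * g θ) * Complex.exp ((Int.cast m : ℂ) * θ * Complex.I))
        = (starRingEnd ℂ) (l * ∫ θ in (0:ℝ)..(2*Real.pi),
            g θ * Complex.exp ((Int.cast (-m) : ℂ) * θ * Complex.I)) := by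
      intro m
      have heq : ∀ θ : ℝ, (starRingEnd ℂ) (l * g θ) * Complex.exp ((Int.cast m : ℂ) * θ * Complex.I)
          = (starRingEnd ℂ) (l * (g θ * Complex.exp ((Int.cast (-m) : ℂ) * θ * Complex.I))) := by
        intro θ
        simp only [map_mul, hce m θ]
        ring
      rw [intervalIntegral.integral_congr (fun θ _ => heq θ), bohr_aux_intervalIntegral_conj]
      congr 1
      rw [← intervalIntegral.integral_const_mul]
    have hconj0 : (∫ θ in (0:ℝ)..(2*Real.pi), (starRingEnd ℂ) (l * g θ))
        = (starRingEnd ℂ) (((2*Real.pi:ℝ):ℂ) * (l * a 0)) := by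
      rw [bohr_aux_intervalIntegral_conj]
      congr 1
      rw [show (fun θ : ℝ => l * g θ) = fun θ : ℝ => l * g θ from rfl,
        intervalIntegral.integral_const_mul, hI0]
      ring
    -- continuity facts
    have hlgcont : Continuous fun θ : ℝ => (starRingEnd ℂ) (l * g θ) :=
      Complex.continuous_conj.comp (continuous_const.mul hgcont)
    -- pointwise identity for u
    have hupt : ∀ θ : ℝ, ((u θ : ℝ) : ℂ)
        = 1 - (1/2) * (l * g θ) - (1/2) * ((starRingEnd ℂ) (l * g θ)) := by
      intro θ
      have := Complex.add_conj (l * g θ)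
      have h2 : ((((l * g θ).re : ℝ)) : ℂ) = (l * g θ + (starRingEnd ℂ) (l * g θ)) / 2 := by
        rw [this]; push_cast; ring
      simp only [hu]
      push_cast
      rw [h2]
      ring
    -- E
    set E : ℝ → ℂ := fun θ => Complex.exp ((Int.cast (-(k:ℤ)) : ℂ) * θ * Complex.I) with hE
    have hEcont : Continuous E := by
      rw [hE]; fun_prop
    have hEnorm : ∀ θ : ℝ, ‖E θ‖ = 1 := by
      intro θ
      have h1 : (Int.cast (-(k:ℤ)) : ℂ) * θ * Complex.I
          = (((Int.cast (-(k:ℤ)) : ℝ) * θ : ℝ) : ℂ) * Complex.I := by push_cast; ring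
      rw [hE]
      simp only [h1]
      rw [Complex.norm_exp_ofReal_mul_I]
    -- compute J
    have hJpt : ∀ θ : ℝ, ((u θ : ℝ) : ℂ) * E θ
        = E θ - (1/2) * (l * (g θ * E θ)) - (1/2) * ((starRingEnd ℂ) (l * g θ) * E θ) := by
      intro θ
      rw [hupt θ]
      ring
    have hint1 : IntervalIntegrable (fun θ : ℝ => E θ - (1/2) * (l * (g θ * E θ))) volume 0 (2*Real.pi) := by
      apply Continuous.intervalIntegrable
      exact hEcont.sub (continuous_const.mul (continuous_const.mul (hgcont.mul hEcont)))
    have hint2 : IntervalIntegrable (fun θ : ℝ => (1/2 : ℂ) * ((starRingEnd ℂ) (l * g θ) * E θ)) volume 0 (2*Real.pi) := by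
      apply Continuous.intervalIntegrable
      exact continuous_const.mul (hlgcont.mul hEcont)
    have hint3 : IntervalIntegrable E volume 0 (2*Real.pi) := hEcont.intervalIntegrable _ _
    have hint4 : IntervalIntegrable (fun θ : ℝ => (1/2 : ℂ) * (l * (g θ * E θ))) volume 0 (2*Real.pi) := by
      apply Continuous.intervalIntegrable
      exact continuous_const.mul (continuous_const.mul (hgcont.mul hEcont))
    have hJ : (∫ θ in (0:ℝ)..(2*Real.pi), ((u θ : ℝ) : ℂ) * E θ)
        = -(((Real.pi:ℝ):ℂ)) * (l * (a k * s ^ k)) := by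
      rw [intervalIntegral.integral_congr (fun θ _ => hJpt θ),
        intervalIntegral.integral_sub hint1 hint2,
        intervalIntegral.integral_sub hint3 hint4]
      rw [hE, bohr_aux_exp_integral (-(k:ℤ)) (by omega)]
      rw [intervalIntegral.integral_const_mul, intervalIntegral.integral_const_mul,
        intervalIntegral.integral_const_mul]
      rw [hIneg]
      have hc := hconj (-(k:ℤ))
      simp only [neg_neg] at hc
      rw [hc, hIpos, mul_zero, map_zero, mul_zero, sub_zero]
      push_cast
      ring
    -- compute ∫ u
    have hU : (∫ θ in (0:ℝ)..(2*Real.pi), u θ) = 2*Real.pi*(1 - ‖a 0‖) := by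
      have h1 : ((∫ θ in (0:ℝ)..(2*Real.pi), u θ : ℝ) : ℂ)
          = ∫ θ in (0:ℝ)..(2*Real.pi), ((u θ : ℝ) : ℂ) := intervalIntegral.integral_ofReal.symm
      have h2 : (∫ θ in (0:ℝ)..(2*Real.pi), ((u θ : ℝ) : ℂ))
          = ((2*Real.pi*(1 - ‖a 0‖) : ℝ) : ℂ) := by
        have hint5 : IntervalIntegrable (fun _ : ℝ => (1:ℂ)) volume 0 (2*Real.pi) :=
          intervalIntegrable_const
        have hint6 : IntervalIntegrable (fun θ : ℝ => (1/2 : ℂ) * (l * g θ)) volume 0 (2*Real.pi) :=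
          (continuous_const.mul (continuous_const.mul hgcont)).intervalIntegrable _ _
        have hint7 : IntervalIntegrable (fun θ : ℝ => (1/2 : ℂ) * ((starRingEnd ℂ) (l * g θ))) volume 0 (2*Real.pi) :=
          (continuous_const.mul hlgcont).intervalIntegrable _ _
        rw [intervalIntegral.integral_congr (fun θ _ => hupt θ),
          intervalIntegral.integral_sub (hint5.sub hint6) hint7,
          intervalIntegral.integral_sub hint5 hint6,
          intervalIntegral.integral_const_mul, intervalIntegral.integral_const_mul,
          intervalIntegral.integral_const_mul, hI0, hconj0,
          intervalIntegral.integral_const]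
        rw [show l * (((2*Real.pi:ℝ):ℂ) * a 0) = ((2*Real.pi:ℝ):ℂ) * (l * a 0) by ring, hl0]
        rw [show ((2*Real.pi:ℝ):ℂ) * ((‖a 0‖:ℝ):ℂ) = (((2*Real.pi*‖a 0‖ : ℝ)):ℂ) by push_cast; ring,
          Complex.conj_ofReal]
        push_cast [Complex.real_smul]
        ring
      exact Complex.ofReal_inj.mp (h1.trans h2)
    -- norm inequality
    have hnormJ : Real.pi * (‖a k‖ * s ^ k) ≤ 2*Real.pi*(1 - ‖a 0‖) := by
      have hb : (0:ℝ) ≤ 2*Real.pi := by positivity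
      have h3 := intervalIntegral.norm_integral_le_integral_norm
        (f := fun θ : ℝ => ((u θ : ℝ) : ℂ) * E θ) (μ := volume) hb
      rw [hJ] at h3
      have h4 : (∫ θ in (0:ℝ)..(2*Real.pi), ‖((u θ : ℝ) : ℂ) * E θ‖)
          = ∫ θ in (0:ℝ)..(2*Real.pi), u θ := by
        apply intervalIntegral.integral_congr
        intro θ _
        show ‖((u θ : ℝ) : ℂ) * E θ‖ = u θ
        rw [norm_mul, hEnorm θ, mul_one, Complex.norm_real, Real.norm_eq_abs,
          _root_.abs_of_nonneg (hu0 θ)]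
      rw [h4, hU] at h3
      have h5 : ‖-(((Real.pi:ℝ):ℂ)) * (l * (a k * s ^ k))‖ = Real.pi * (‖a k‖ * s ^ k) := by
        rw [norm_mul, norm_neg, Complex.norm_real, Real.norm_eq_abs, _root_.abs_of_nonneg hπ.le,
          norm_mul, hl1, one_mul, norm_mul, norm_pow, Complex.norm_real, Real.norm_eq_abs,
          _root_.abs_of_nonneg hs0.le]
      rwa [h5] at h3
    nlinarith [hπ, pow_nonneg hs0.le k, norm_nonneg (a k)]
  -- take the limit s → 1⁻
  have hlim : Filter.Tendsto (fun s : ℝ => ‖a k‖ * s ^ k) (nhdsWithin 1 (Set.Iio (1:ℝ)))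
      (nhds (‖a k‖ * 1 ^ k)) := by
    have hc : Continuous fun s : ℝ => ‖a k‖ * s ^ k := by fun_prop
    exact (hc.tendsto 1).mono_left nhdsWithin_le_nhds
  have hle := le_of_tendsto hlim (by
    filter_upwards [Ioo_mem_nhdsLT_of_mem (show (1:ℝ) ∈ Set.Ioc (0:ℝ) 1 by constructor <;> norm_num)]
      with s hs
    exact key s hs)
  simpa using hle

set_option maxHeartbeats 1000000 in
/-- Bohr's inequality for bounded analytic functions of the form `∑ aₖ z^(pk)`:
the majorant series is at most `1` for `r ≤ 3^(−1/p)`. -/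
theorem bohr_inequality_p_symmetric
    (p : ℕ) (hp : 0 < p)
    (a : ℕ → ℂ) (f : ℂ → ℂ)
    (hf : ∀ z : ℂ, ‖z‖ < 1 → HasSum (fun k : ℕ => a k * z ^ (p * k)) (f z))
    (hbound : ∀ z : ℂ, ‖z‖ < 1 → ‖f z‖ ≤ 1) :
    ∀ r : ℝ, 0 ≤ r → r ≤ (3 : ℝ) ^ (-(1 / (p : ℝ))) →
      (∑' k : ℕ, ‖a k‖ * r ^ (p * k)) ≤ 1 := by
  intro r hr0 hr1
  have hp' : (0:ℝ) < (p:ℝ) := by exact_mod_cast hp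
  set t : ℝ := r ^ p with ht
  have ht0 : 0 ≤ t := pow_nonneg hr0 p
  have ht13 : t ≤ 1/3 := by
    calc t ≤ ((3:ℝ) ^ (-(1/(p:ℝ)))) ^ p := pow_le_pow_left₀ hr0 hr1 p
      _ = 1/3 := by
        rw [← Real.rpow_natCast ((3:ℝ) ^ (-(1/(p:ℝ)))) p, ← Real.rpow_mul (by norm_num)]
        rw [show -(1/(p:ℝ)) * (p:ℕ) = -1 by field_simp]
        rw [Real.rpow_neg_one]
        norm_num
  have ht1 : t < 1 := lt_of_le_of_lt ht13 (by norm_num)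
  have ha : ∀ w : ℂ, ‖w‖ < 1 → ∃ v, HasSum (fun n => a n * w ^ n) v ∧ ‖v‖ ≤ 1 := by
    intro w hw
    obtain ⟨z, hz⟩ := IsAlgClosed.exists_pow_nat_eq w hp
    have hz1 : ‖z‖ < 1 := by
      by_contra h
      push_neg at h
      have h2 : (1:ℝ) ≤ ‖w‖ := by
        rw [← hz, norm_pow]
        exact one_le_pow₀ h
      linarith
    refine ⟨f z, ?_, hbound z hz1⟩
    have h3 := hf z hz1
    simpa [pow_mul, hz] using h3
  have ha0 := bohr_aux_a0 a ha
  have hbk : ∀ k, ‖a k‖ ≤ 2 := by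
    intro k
    rcases Nat.eq_zero_or_pos k with h | h
    · rw [h]; linarith
    · have := bohr_aux_coeff_bound a ha k h
      nlinarith [norm_nonneg (a 0)]
  have hterm : ∀ k : ℕ, ‖a k‖ * r ^ (p * k) = ‖a k‖ * t ^ k := by
    intro k; rw [ht, ← pow_mul]
  rw [tsum_congr hterm]
  have hsummaj : Summable (fun k : ℕ => ‖a k‖ * t ^ k) := by
    apply Summable.of_nonneg_of_le (fun k => by positivity) (fun k => ?_)
      ((summable_geometric_of_lt_one ht0 ht1).mul_left 2)
    exact mul_le_mul_of_nonneg_right (hbk k) (pow_nonneg ht0 k)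
  rw [Summable.tsum_eq_zero_add hsummaj]
  simp only [pow_zero, mul_one]
  have h1t : (0:ℝ) < 1 - t := by linarith
  have hc : (0:ℝ) ≤ 1 - ‖a 0‖ := by linarith
  have htail : (∑' k : ℕ, ‖a (k+1)‖ * t ^ (k+1)) ≤ 1 - ‖a 0‖ := by
    have hb : ∀ k : ℕ, ‖a (k+1)‖ * t ^ (k+1) ≤ (2*(1-‖a 0‖)) * (t * t ^ k) := by
      intro k
      have h5 := bohr_aux_coeff_bound a ha (k+1) (Nat.succ_pos k)
      have h7 : (0:ℝ) ≤ t ^ (k+1) := pow_nonneg ht0 (k+1)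
      calc ‖a (k+1)‖ * t^(k+1) ≤ (2*(1-‖a 0‖)) * t^(k+1) :=
            mul_le_mul_of_nonneg_right h5 h7
        _ = (2*(1-‖a 0‖)) * (t * t^k) := by ring
    have hsum2 : Summable (fun k : ℕ => (2*(1-‖a 0‖)) * (t * t ^ k)) :=
      (((summable_geometric_of_lt_one ht0 ht1).mul_left t).mul_left _)
    calc (∑' k : ℕ, ‖a (k+1)‖ * t ^ (k+1))
        ≤ ∑' k : ℕ, (2*(1-‖a 0‖)) * (t * t ^ k) :=
          Summable.tsum_le_tsum hb ((summable_nat_add_iff 1).mpr hsummaj) hsum2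
      _ = (2*(1-‖a 0‖)) * (t * (1-t)⁻¹) := by
          rw [tsum_mul_left, tsum_mul_left, tsum_geometric_of_lt_one ht0 ht1]
      _ ≤ 1 - ‖a 0‖ := by
          have h6 : t * (1-t)⁻¹ ≤ 1/2 := by
            rw [← div_eq_mul_inv, div_le_iff₀ h1t]; linarith
          nlinarith [mul_le_mul_of_nonneg_left h6 (by linarith : (0:ℝ) ≤ 2*(1-‖a 0‖))]
  linarith
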